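/- Assume each r_i is a coherent risk measure on L^p(Ω; ℝ) that is dilatation monotone, i.e. r_i(E(ξ | 𝔊)) ≤ r_i(ξ) for every sub-σ-algebra 𝔊 ⊆ 𝔉 and every ξ ∈ L^p(Ω; ℝ). Let K ⊆ ℝ^d be a deterministic closed convex cone and X ∈ L^p(Ω; ℝ^d). Then there exists η ∈ L^p(Ω; ℝ^d) with η(ω) ∈ K a.s. and r_i(X_i + η_i) ≤ 0 for all i, if and only if there exists a Borel measurable function g : ℝ^d → ℝ^d with g(X) ∈ L^p(Ω; ℝ^d), g(X(ω)) ∈ K a.s., and r_i(X_i + g_i(X)) ≤ 0 for all i. In other words, the set-valued portfolio X + K is acceptable if and only if it possesses an acceptable selection that is a deterministic function of X. -/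

import Mathlib

open MeasureTheory Set Filter
open scoped Pointwise ENNReal RealInnerProductSpace

noncomputable section

/-- `ℝ^d` with the Euclidean norm. -/
abbrev Vec (d : ℕ) := EuclideanSpace ℝ (Fin d)

/-- Effros measurability of a set-valued map: `{ω : X(ω) ∩ G ≠ ∅}` is measurable
for every open `G`. -/
def EffrosMeasurable {Ω : Type*} [MeasurableSpace Ω] {d : ℕ} (X : Ω → Set (Vec d)) : Prop :=
  ∀ G : Set (Vec d), IsOpen G → MeasurableSet {ω | (X ω ∩ G).Nonempty}

/-- A set-valued portfolio: an Effros-measurable map with nonempty closed convex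
lower-set values. -/
structure IsPortfolio {Ω : Type*} [MeasurableSpace Ω] {d : ℕ} (X : Ω → Set (Vec d)) : Prop where
  effros : EffrosMeasurable X
  nonempty : ∀ ω, (X ω).Nonempty
  isClosed : ∀ ω, IsClosed (X ω)
  convex : ∀ ω, Convex ℝ (X ω)
  lower : ∀ ω, ∀ x ∈ X ω, ∀ y : Vec d, (∀ i, y i ≤ x i) → y ∈ X ω

/-- A coherent risk measure on `L^p(Ω; ℝ)` with values in `ℝ ∪ {+∞} ⊆ EReal`:
monotone (antitone in the gain), cash invariant, subadditive and positively homogeneous. -/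
structure IsCoherent {Ω : Type*} [MeasurableSpace Ω] (μ : Measure Ω) (p : ℝ≥0∞)
    (r : (Ω → ℝ) → EReal) : Prop where
  ne_bot : ∀ ξ : Ω → ℝ, MemLp ξ p μ → r ξ ≠ ⊥
  mono : ∀ ξ η : Ω → ℝ, MemLp ξ p μ → MemLp η p μ → (∀ᵐ ω ∂μ, ξ ω ≤ η ω) → r η ≤ r ξ
  cash : ∀ ξ : Ω → ℝ, MemLp ξ p μ → ∀ c : ℝ, r (fun ω => ξ ω + c) = r ξ - (c : EReal)
  subadd : ∀ ξ η : Ω → ℝ, MemLp ξ p μ → MemLp η p μ →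
    r (fun ω => ξ ω + η ω) ≤ r ξ + r η
  homog : ∀ ξ : Ω → ℝ, MemLp ξ p μ → ∀ c : ℝ, 0 < c →
    r (fun ω => c * ξ ω) = (c : EReal) * r ξ

/-- The selection risk measure `ρ_{s,0}(𝐗)`: the set of deterministic `x ∈ ℝ^d`
for which `𝐗 + x` has a selection with all individually acceptable components. -/
def rho0 {Ω : Type*} [MeasurableSpace Ω] (μ : Measure Ω) (p : ℝ≥0∞) {d : ℕ}
    (r : Fin d → (Ω → ℝ) → EReal) (X : Ω → Set (Vec d)) : Set (Vec d) :=
  {x | ∃ ξ : Ω → Vec d, MemLp ξ p μ ∧ (∀ᵐ ω ∂μ, ξ ω ∈ X ω) ∧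
        ∀ i, r i (fun ω => ξ ω i + x i) ≤ 0}

open MeasureTheory Set Filter ProbabilityTheory
open scoped MeasureTheory ProbabilityTheory ENNReal

lemma jensen_rpow {α : Type*} [MeasurableSpace α] (ν : Measure α) [IsProbabilityMeasure ν]
    (f : α → ℝ≥0∞) (hf : AEMeasurable f ν) {q : ℝ} (hq : 1 ≤ q) :
    (∫⁻ y, f y ∂ν) ^ q ≤ ∫⁻ y, f y ^ q ∂ν := by
  rcases eq_or_lt_of_le hq with h1 | h1
  · simp [← h1]
  · have hq0 : 0 < q := lt_of_lt_of_le one_pos hq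
    have hpq := Real.HolderConjugate.conjExponent h1
    have hH := ENNReal.lintegral_mul_le_Lp_mul_Lq ν hpq hf
      (aemeasurable_const : AEMeasurable (fun _ => (1:ℝ≥0∞)) ν)
    simp only [mul_one, Pi.mul_apply, ENNReal.one_rpow, lintegral_one, measure_univ,
      mul_one] at hH
    have := ENNReal.rpow_le_rpow hH (le_of_lt hq0)
    rwa [← ENNReal.rpow_mul, one_div, inv_mul_cancel₀ (ne_of_gt hq0), ENNReal.rpow_one] at this

lemma IsCoherent.congr' {Ω : Type*} [MeasurableSpace Ω] {μ : Measure Ω} {p : ℝ≥0∞}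
    {r : (Ω → ℝ) → EReal} (h : IsCoherent μ p r)
    {ξ η : Ω → ℝ} (hξ : MemLp ξ p μ) (hη : MemLp η p μ) (hae : ξ =ᵐ[μ] η) : r ξ = r η :=
  le_antisymm (h.mono η ξ hη hξ (hae.symm.le)) (h.mono ξ η hξ hη hae.le)

/-- Theorem 5.3: for dilatation monotone marginal risk measures and a deterministic
exchange cone `K`, the portfolio `X + K` is acceptable if and only if it has an
acceptable selection which is a deterministic (Borel) function of `X`. -/
theorem statement12 {Ω : Type*} [mΩ : MeasurableSpace Ω] (μ : Measure Ω)
    [IsProbabilityMeasure μ] [μ.IsComplete] {d : ℕ} (p : ℝ≥0∞) (hp : 1 ≤ p)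
    (r : Fin d → (Ω → ℝ) → EReal) (hr : ∀ i, IsCoherent μ p (r i))
    (hdil : ∀ i, ∀ m : MeasurableSpace Ω, m ≤ mΩ →
      ∀ ξ : Ω → ℝ, MemLp ξ p μ → r i (μ[ξ|m]) ≤ r i ξ)
    (K : Set (Vec d)) (hKcl : IsClosed K) (hKconv : Convex ℝ K)
    (hKcone : ∀ c : ℝ, 0 < c → ∀ y ∈ K, c • y ∈ K)
    (X : Ω → Vec d) (hX : MemLp X p μ) :
    (∃ η : Ω → Vec d, MemLp η p μ ∧ (∀ᵐ ω ∂μ, η ω ∈ K) ∧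
      ∀ i, r i (fun ω => X ω i + η ω i) ≤ 0) ↔
    (∃ g : Vec d → Vec d, Measurable g ∧ MemLp (fun ω => g (X ω)) p μ ∧
      (∀ᵐ ω ∂μ, g (X ω) ∈ K) ∧ ∀ i, r i (fun ω => X ω i + g (X ω) i) ≤ 0) := by
  constructor
  · rintro ⟨η, hη, hηK, hηr⟩
    have hXae : AEMeasurable X μ := hX.aestronglyMeasurable.aemeasurable
    set X' : Ω → Vec d := hXae.mk X with hX'def
    have hX'meas : Measurable X' := hXae.measurable_mk
    have hXX' : X =ᵐ[μ] X' := hXae.ae_eq_mk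
    have hX'mem : MemLp X' p μ := hX.ae_eq hXX'
    have hηae : AEMeasurable η μ := hη.aestronglyMeasurable.aemeasurable
    set κ := ProbabilityTheory.condDistrib η X' μ with hκ
    set g : Vec d → Vec d := fun x => ∫ y, y ∂(κ x) with hgdef
    -- measurability of g
    have hgsm : StronglyMeasurable g := by
      have h2 : StronglyMeasurable (fun p : Vec d × Vec d => p.2) :=
        continuous_snd.stronglyMeasurable
      exact h2.integral_kernel_prod_right'
    have hgX'sm : AEStronglyMeasurable (fun a => g (X' a)) μ :=
      (hgsm.measurable.comp hX'meas).aestronglyMeasurable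
    -- integrability
    have hηint : Integrable η μ := hη.integrable hp
    have hprodae : AEMeasurable (fun a => (X' a, η a)) μ :=
      hX'meas.aemeasurable.prodMk hηae
    haveI : IsProbabilityMeasure (μ.map fun a => (X' a, η a)) :=
      Measure.isProbabilityMeasure_map hprodae
    haveI : IsProbabilityMeasure (μ.map X') :=
      Measure.isProbabilityMeasure_map hX'meas.aemeasurable
    have hsndint : Integrable (fun q : Vec d × Vec d => q.2) (μ.map fun a => (X' a, η a)) := by
      rw [integrable_map_measure measurable_snd.aestronglyMeasurable hprodae]
      exact hηint
    have hint_ae : ∀ᵐ a ∂μ, Integrable (fun y : Vec d => y) (κ (X' a)) :=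
      hsndint.condDistrib_ae hX'meas.aemeasurable hηae
    -- a.e. membership transfer to the kernel
    have hmemS : ∀ S : Set (Vec d), MeasurableSet S → (∀ᵐ a ∂μ, η a ∈ S) →
        ∀ᵐ a ∂μ, (κ (X' a)) Sᶜ = 0 := by
      intro S hS hmem
      have h2 : μ (X' ⁻¹' univ ∩ η ⁻¹' Sᶜ) = 0 := by
        rw [preimage_univ, univ_inter]
        exact ae_iff.mp hmem
      have h1 : ∫⁻ a, κ (X' a) Sᶜ ∂μ = 0 := by
        calc ∫⁻ a, κ (X' a) Sᶜ ∂μ = ∫⁻ a in X' ⁻¹' univ, κ (X' a) Sᶜ ∂μ := by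
              rw [preimage_univ, Measure.restrict_univ]
          _ = μ (X' ⁻¹' univ ∩ η ⁻¹' Sᶜ) :=
              ProbabilityTheory.setLIntegral_preimage_condDistrib hX'meas hηae hS.compl
                MeasurableSet.univ
          _ = 0 := h2
      have hmeas : Measurable fun a => κ (X' a) Sᶜ :=
        (ProbabilityTheory.Kernel.measurable_coe _ hS.compl).comp hX'meas
      exact (lintegral_eq_zero_iff hmeas).mp h1
    -- membership in K
    have hgKae : ∀ᵐ a ∂μ, g (X' a) ∈ K := by
      filter_upwards [hmemS K hKcl.measurableSet hηK, hint_ae] with a hA hI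
      have hae : ∀ᵐ y ∂(κ (X' a)), y ∈ K := by
        rw [ae_iff]
        exact hA
      exact hKconv.integral_mem hKcl hae hI
    -- key lintegral identity
    have hmapeq : (μ.map X') ⊗ₘ κ = μ.map (fun a => (X' a, η a)) := by
      rw [hκ, ProbabilityTheory.condDistrib, ← Measure.fst_map_prodMk₀ hηae]
      exact Measure.disintegrate _ _
    have hkey : ∀ f : Vec d → ℝ≥0∞, Measurable f →
        ∫⁻ a, (∫⁻ y, f y ∂(κ (X' a))) ∂μ = ∫⁻ a, f (η a) ∂μ := by
      intro f hf
      have hFmeas : Measurable fun x => ∫⁻ y, f y ∂(κ x) :=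
        Measurable.lintegral_kernel_prod_right' (hf.comp measurable_snd)
      calc ∫⁻ a, (∫⁻ y, f y ∂(κ (X' a))) ∂μ
          = ∫⁻ x, (∫⁻ y, f y ∂(κ x)) ∂(μ.map X') := (lintegral_map hFmeas hX'meas).symm
        _ = ∫⁻ q, f q.2 ∂((μ.map X') ⊗ₘ κ) :=
            (Measure.lintegral_compProd (hf.comp measurable_snd)).symm
        _ = ∫⁻ q, f q.2 ∂(μ.map fun a => (X' a, η a)) := by rw [hmapeq]
        _ = ∫⁻ a, f (η a) ∂μ :=
            lintegral_map' (hf.comp measurable_snd).aemeasurable hprodae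
    -- MemLp of g ∘ X'
    have hgX'mem : MemLp (fun a => g (X' a)) p μ := by
      by_cases hptop : p = ∞
      · subst hptop
        have hC : eLpNormEssSup η μ < ∞ := by
          have := hη.2
          rwa [eLpNorm_exponent_top] at this
        set C := eLpNormEssSup η μ with hCdef
        have hηS : ∀ᵐ a ∂μ, η a ∈ Metric.closedBall (0 : Vec d) C.toReal := by
          filter_upwards [ae_le_eLpNormEssSup (f := η) (μ := μ)] with a ha
          rw [Metric.mem_closedBall, dist_zero_right]
          simpa using ENNReal.toReal_mono hC.ne ha
        have hb : ∀ᵐ a ∂μ, ‖g (X' a)‖ ≤ C.toReal := by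
          filter_upwards [hmemS _ Metric.isClosed_closedBall.measurableSet hηS] with a hA
          have hsub : {y : Vec d | ¬ ((‖y‖₊ : ℝ≥0∞) ≤ C)} ⊆
              (Metric.closedBall (0 : Vec d) C.toReal)ᶜ := by
            intro y hy
            rw [mem_compl_iff]
            intro hmem
            refine hy ?_
            have hcon : ‖y‖ ≤ C.toReal := by
              simpa [dist_zero_right] using hmem
            have h5 : (‖y‖₊ : ℝ≥0∞) ≤ ENNReal.ofReal C.toReal := by
              rw [← enorm_eq_nnnorm, ← ofReal_norm]
              exact ENNReal.ofReal_le_ofReal hcon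
            rwa [ENNReal.ofReal_toReal hC.ne] at h5
          have hae : ∀ᵐ y ∂(κ (X' a)), (‖y‖₊ : ℝ≥0∞) ≤ C := by
            rw [ae_iff]
            exact measure_mono_null hsub hA
          have h1 : (‖g (X' a)‖₊ : ℝ≥0∞) ≤ ∫⁻ y, (‖y‖₊ : ℝ≥0∞) ∂(κ (X' a)) :=
            enorm_integral_le_lintegral_enorm _
          have h2 : ∫⁻ y, (‖y‖₊ : ℝ≥0∞) ∂(κ (X' a)) ≤ C := by
            calc ∫⁻ y, (‖y‖₊ : ℝ≥0∞) ∂(κ (X' a)) ≤ ∫⁻ _, C ∂(κ (X' a)) :=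
                  lintegral_mono_ae hae
              _ = C := by simp
          simpa using ENNReal.toReal_mono hC.ne (h1.trans h2)
        exact memLp_top_of_bound hgX'sm _ hb
      · have hp0 : p ≠ 0 := fun h => by simp [h] at hp
        have hq1 : 1 ≤ p.toReal := ENNReal.toReal_one ▸ ENNReal.toReal_mono hptop hp
        have hq0 : (0:ℝ) < p.toReal := lt_of_lt_of_le one_pos hq1
        refine ⟨hgX'sm, ?_⟩
        rw [eLpNorm_eq_lintegral_rpow_enorm_toReal hp0 hptop]
        simp only [enorm_eq_nnnorm]
        have hmeasq : Measurable fun y : Vec d => (‖y‖₊ : ℝ≥0∞) ^ p.toReal :=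
          (measurable_coe_nnreal_ennreal.comp measurable_nnnorm).pow_const _
        have hbound : ∫⁻ a, (‖g (X' a)‖₊ : ℝ≥0∞) ^ p.toReal ∂μ ≤
            ∫⁻ a, (‖η a‖₊ : ℝ≥0∞) ^ p.toReal ∂μ := by
          have hptwise : ∀ a, (‖g (X' a)‖₊ : ℝ≥0∞) ^ p.toReal ≤
              ∫⁻ y, (‖y‖₊ : ℝ≥0∞) ^ p.toReal ∂(κ (X' a)) := by
            intro a
            have h1 : (‖g (X' a)‖₊ : ℝ≥0∞) ≤ ∫⁻ y, (‖y‖₊ : ℝ≥0∞) ∂(κ (X' a)) :=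
              enorm_integral_le_lintegral_enorm _
            have h2 := jensen_rpow (κ (X' a)) (fun y => (‖y‖₊ : ℝ≥0∞))
              (measurable_coe_nnreal_ennreal.comp measurable_nnnorm).aemeasurable hq1
            exact le_trans (ENNReal.rpow_le_rpow h1 (le_of_lt hq0)) h2
          calc ∫⁻ a, (‖g (X' a)‖₊ : ℝ≥0∞) ^ p.toReal ∂μ
              ≤ ∫⁻ a, ∫⁻ y, (‖y‖₊ : ℝ≥0∞) ^ p.toReal ∂(κ (X' a)) ∂μ :=
                lintegral_mono hptwise
            _ = ∫⁻ a, (‖η a‖₊ : ℝ≥0∞) ^ p.toReal ∂μ := hkey _ hmeasq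
        have hfin : ∫⁻ a, (‖η a‖₊ : ℝ≥0∞) ^ p.toReal ∂μ < ∞ := by
          have h2 := hη.2
          rw [eLpNorm_eq_lintegral_rpow_enorm_toReal hp0 hptop] at h2
          simp only [enorm_eq_nnnorm] at h2
          exact (ENNReal.rpow_lt_top_iff_of_pos (by positivity)).mp h2
        calc (∫⁻ a, (‖g (X' a)‖₊ : ℝ≥0∞) ^ p.toReal ∂μ) ^ (1 / p.toReal)
            ≤ (∫⁻ a, (‖η a‖₊ : ℝ≥0∞) ^ p.toReal ∂μ) ^ (1 / p.toReal) :=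
              ENNReal.rpow_le_rpow hbound (by positivity)
          _ < ∞ := ENNReal.rpow_lt_top_of_nonneg (by positivity) hfin.ne
    have hgXmem : MemLp (fun a => g (X a)) p μ := by
      refine hgX'mem.ae_eq ?_
      filter_upwards [hXX'] with a ha
      rw [ha]
    have hgXK : ∀ᵐ a ∂μ, g (X a) ∈ K := by
      filter_upwards [hgKae, hXX'] with a h1 h2
      rw [h2]; exact h1
    -- coordinates are in Lp
    have hXi : ∀ (Z : Ω → Vec d) (i : Fin d), MemLp Z p μ → MemLp (fun ω => Z ω i) p μ := by
      intro Z i hZ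
      exact ((EuclideanSpace.proj (𝕜 := ℝ) i).comp_memLp' hZ).ae_eq
        (Eventually.of_forall fun ω => rfl)
    -- conditional expectation computation
    set m : MeasurableSpace Ω := MeasurableSpace.comap X' inferInstance with hmdef
    have hm : m ≤ mΩ := hX'meas.comap_le
    haveI : SigmaFinite (μ.trim hm) := by
      haveI := isFiniteMeasure_trim hm (μ := μ)
      infer_instance
    have hcond : ∀ i, μ[(fun ω => X' ω i + η ω i)|m] =ᵐ[μ] fun ω => X' ω i + g (X' ω) i := by
      intro i
      have hX'i_int : Integrable (fun ω => X' ω i) μ := (hXi X' i hX'mem).integrable hp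
      have hηi_int : Integrable (fun ω => η ω i) μ := (hXi η i hη).integrable hp
      have h1 : μ[(fun ω => X' ω i + η ω i)|m] =ᵐ[μ]
          μ[fun ω => X' ω i|m] + μ[fun ω => η ω i|m] := condExp_add hX'i_int hηi_int m
      have h2 : μ[fun ω => X' ω i|m] = fun ω => X' ω i := by
        refine condExp_of_stronglyMeasurable hm ?_ hX'i_int
        exact Measurable.stronglyMeasurable
          ((EuclideanSpace.proj (𝕜 := ℝ) i).measurable.comp
            (comap_measurable X'))
      have h3 : μ[fun ω => η ω i|m] =ᵐ[μ] fun a => ∫ y, y i ∂(κ (X' a)) := by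
        have hf_sm : StronglyMeasurable (fun q : Vec d × Vec d => q.2 i) :=
          ((EuclideanSpace.proj (𝕜 := ℝ) i).continuous.comp continuous_snd).stronglyMeasurable
        exact ProbabilityTheory.condExp_prod_ae_eq_integral_condDistrib hX'meas hηae hf_sm hηi_int
      have h4 : ∀ᵐ a ∂μ, ∫ y, y i ∂(κ (X' a)) = g (X' a) i := by
        filter_upwards [hint_ae] with a hI
        have := (EuclideanSpace.proj (𝕜 := ℝ) i).integral_comp_comm hI
        simpa using this
      filter_upwards [h1, h3, h4] with a ha1 ha3 ha4
      rw [ha1]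
      simp only [Pi.add_apply, congrFun h2 a, ha3, ha4]
    -- conclusion
    refine ⟨g, hgsm.measurable, hgXmem, hgXK, fun i => ?_⟩
    letI : MeasurableSpace Ω := mΩ
    have hξmem : MemLp (fun ω => X ω i + η ω i) p μ := (hXi X i hX).add (hXi η i hη)
    have hξ'mem : MemLp (fun ω => X' ω i + η ω i) p μ := (hXi X' i hX'mem).add (hXi η i hη)
    have htgt : MemLp (fun ω => X ω i + g (X ω) i) p μ :=
      (hXi X i hX).add (hXi _ i hgXmem)
    have htgt' : (fun ω => X ω i + g (X ω) i) =ᵐ[μ] fun ω => X' ω i + g (X' ω) i := by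
      filter_upwards [hXX'] with a ha
      rw [ha]
    have hcondmem : MemLp (μ[(fun ω => X' ω i + η ω i)|m]) p μ :=
      htgt.ae_eq (htgt'.trans (hcond i).symm)
    have e1 : r i (fun ω => X ω i + g (X ω) i) = r i (μ[(fun ω => X' ω i + η ω i)|m]) :=
      (hr i).congr' htgt hcondmem (htgt'.trans (hcond i).symm)
    have e2 : r i (fun ω => X' ω i + η ω i) = r i (fun ω => X ω i + η ω i) :=
      (hr i).congr' hξ'mem hξmem (by filter_upwards [hXX'] with a ha; rw [ha])
    calc r i (fun ω => X ω i + g (X ω) i)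
        = r i (μ[(fun ω => X' ω i + η ω i)|m]) := e1
      _ ≤ r i (fun ω => X' ω i + η ω i) := hdil i m hm _ hξ'mem
      _ = r i (fun ω => X ω i + η ω i) := e2
      _ ≤ 0 := hηr i
  · rintro ⟨g, _, hgmem, hgK, hgr⟩
    exact ⟨fun ω => g (X ω), hgmem, hgK, hgr⟩
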